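/- arXiv:2506.13157 — 7 statements merged into one kernel-verified Lean document; each statement's English description precedes it below -/
import Mathlib

section
/- Let n ≥ 2 and let W_1, …, W_n be nonempty subsets of M satisfying condition (SD). Then there exist total preorders ≼_1, …, ≼_n on M and, for each i ∈ {1,…,n−1}, a nonempty set A_i ⊆ M and a set B_i ⊆ M, such that: ≼_1 is the full-meet preorder of W_1; each ≼_i is faithful to W_i; and for each i ∈ {1,…,n−1}, letting ≼'_i be the lexicographic revision of ≼_i by A_i and R_i = min(A_i, ≼_i), it holds that W_{i+1} = R_i ∪ min(M\B_i, ≼'_i) and ≼_{i+1} is the moderate contraction of ≼'_i by B_i. In other words, every sequence of belief sets satisfying (SD) is generated by iterating a lexicographic (Darwiche–Pearl compliant) revision followed by a moderate (Darwiche–Pearl compliant) contraction. -/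
/-- A possible world over the propositional variables `P`. -/
abbrev World (P : Type) := P → Bool

/-- `minSet S le` is the set of `le`-minimal elements of `S`. -/
def minSet {P : Type} (S : Set (World P)) (le : World P → World P → Prop) :
    Set (World P) :=
  {r | r ∈ S ∧ ∀ r' ∈ S, le r r'}

/-- A total preorder: reflexive, transitive and total. -/
def TotalPreorder {P : Type} (le : World P → World P → Prop) : Prop :=
  Reflexive le ∧ Transitive le ∧ ∀ r r', le r r' ∨ le r' r

/-- `le` is faithful to `W` iff the `le`-minimal worlds are exactly `W`. -/
def Faithful {P : Type} (le : World P → World P → Prop) (W : Set (World P)) : Prop :=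
  minSet Set.univ le = W

/-- The strict part of a preorder. -/
def strictPart {P : Type} (le : World P → World P → Prop) (r r' : World P) : Prop :=
  le r r' ∧ ¬ le r' r

/-- The full-meet preorder of a belief set `W`. -/
def fullMeet {P : Type} (W : Set (World P)) : World P → World P → Prop :=
  fun r r' => r ∈ W ∨ r' ∉ W

/-- Type-B distance: the symmetric difference of the model sets. -/
def distB {P : Type} (W1 W2 : Set (World P)) : Set (World P) :=
  (W1 \ W2) ∪ (W2 \ W1)

/-- Condition (SD) on a sequence of belief sets. -/
def SD {P : Type} {n : ℕ} (W : Fin n → Set (World P)) : Prop :=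
  ∀ i j m : Fin n, i < j → j < m → distB (W j) (W m) ⊆ distB (W i) (W m)

/-- Lexicographic revision of the preorder `le` by the (nonempty) input `A`. -/
def lexRev {P : Type} (le : World P → World P → Prop) (A : Set (World P)) :
    World P → World P → Prop :=
  fun r r' => (r ∈ A ∧ r' ∉ A) ∨ ((r ∈ A ↔ r' ∈ A) ∧ le r r')

/-- `le''` is the moderate contraction of `le` (faithful to `R`) by `B`:
conditions (C1), (C2), (MC) and faithfulness to `R ∪ min(M\B, le)`. -/
def IsModCon {P : Type} (le : World P → World P → Prop) (R B : Set (World P))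
    (le'' : World P → World P → Prop) : Prop :=
  TotalPreorder le'' ∧
  (∀ r r', r ∈ B → r' ∈ B → (le'' r r' ↔ le r r')) ∧
  (∀ r r', r ∉ B → r' ∉ B → (le'' r r' ↔ le r r')) ∧
  (∀ r r', r ∉ B → r' ∈ B → r' ∉ R ∪ minSet Bᶜ le → strictPart le'' r r') ∧
  minSet Set.univ le'' = R ∪ minSet Bᶜ le

open Classical in
noncomputable def gAux {P : Type} {n : ℕ} (W : Fin n → Set (World P)) (i : ℕ) (r : World P) : ℕ :=
  (Finset.univ.filter (fun j : Fin n => j.1 ≤ i ∧ r ∈ W j)).sup (fun j => j.1 + 1)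

lemma gAux_le {P : Type} {n : ℕ} (W : Fin n → Set (World P)) (i : ℕ) (r : World P) :
    gAux W i r ≤ i + 1 := by
  classical
  apply Finset.sup_le
  intro j hj
  simp only [Finset.mem_filter, Finset.mem_univ, true_and] at hj
  omega

lemma gAux_of_mem {P : Type} {n : ℕ} (W : Fin n → Set (World P)) {i : ℕ} (h : i < n)
    {r : World P} (hr : r ∈ W ⟨i, h⟩) : gAux W i r = i + 1 := by
  classical
  refine le_antisymm (gAux_le W i r) ?_
  unfold gAux
  exact Finset.le_sup (f := fun j : Fin n => j.1 + 1) (b := ⟨i, h⟩)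
    (by simp only [Finset.mem_filter, Finset.mem_univ, true_and]; exact ⟨le_refl _, hr⟩)

lemma gAux_mem_of_eq {P : Type} {n : ℕ} (W : Fin n → Set (World P)) {i : ℕ}
    {r : World P} (h : gAux W i r = i + 1) : ∃ hn : i < n, r ∈ W ⟨i, hn⟩ := by
  classical
  set s := Finset.univ.filter (fun j : Fin n => j.1 ≤ i ∧ r ∈ W j) with hs
  have hne : s.Nonempty := by
    by_contra hemp
    rw [Finset.not_nonempty_iff_eq_empty] at hemp
    have : gAux W i r = 0 := by rw [gAux, ← hs, hemp]; simp
    omega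
  obtain ⟨j, hj, hje⟩ := Finset.exists_mem_eq_sup s hne (fun j : Fin n => j.1 + 1)
  have hsup : gAux W i r = j.1 + 1 := hje
  have hji : j.1 = i := by omega
  simp only [hs, Finset.mem_filter, Finset.mem_univ, true_and] at hj
  have hn' : i < n := hji ▸ j.isLt
  refine ⟨hn', ?_⟩
  have : j = ⟨i, hn'⟩ := Fin.ext hji
  exact this ▸ hj.2

lemma gAux_zero {P : Type} {n : ℕ} (W : Fin n → Set (World P)) {i : ℕ} {r : World P}
    (h : ∀ j : Fin n, j.1 ≤ i → r ∉ W j) : gAux W i r = 0 := by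
  classical
  refine Nat.le_zero.mp (Finset.sup_le ?_)
  intro j hj
  simp only [Finset.mem_filter, Finset.mem_univ, true_and] at hj
  exact absurd hj.2 (h j hj.1)

lemma gAux_succ_not_mem {P : Type} {n : ℕ} (W : Fin n → Set (World P)) {i : ℕ}
    (h : i + 1 < n) {r : World P} (hr : r ∉ W ⟨i + 1, h⟩) :
    gAux W (i + 1) r = gAux W i r := by
  classical
  unfold gAux
  congr 1
  ext j
  simp only [Finset.mem_filter, Finset.mem_univ, true_and]
  constructor
  · rintro ⟨hj1, hj2⟩
    refine ⟨?_, hj2⟩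
    rcases Nat.lt_or_ge j.1 (i + 1) with h' | h'
    · omega
    · exfalso
      have hje : j = ⟨i + 1, h⟩ := Fin.ext (show j.1 = i + 1 by omega)
      exact hr (hje ▸ hj2)
  · rintro ⟨hj1, hj2⟩; exact ⟨by omega, hj2⟩

lemma sd_key {P : Type} {n : ℕ} {W : Fin n → Set (World P)} (hSD : SD W)
    {i : ℕ} (hi : i + 1 < n) {r : World P} (hr1 : r ∈ W ⟨i + 1, hi⟩)
    (j : Fin n) (hj : j.1 ≤ i) (hrj : r ∈ W j) : r ∈ W ⟨i, by omega⟩ := by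
  rcases eq_or_lt_of_le hj with he | hlt
  · have hje : j = ⟨i, by omega⟩ := Fin.ext he
    exact hje ▸ hrj
  · by_contra hni
    have hmem : r ∈ distB (W ⟨i, by omega⟩) (W ⟨i + 1, hi⟩) := Or.inr ⟨hr1, hni⟩
    have := hSD j ⟨i, by omega⟩ ⟨i + 1, hi⟩ hlt (Nat.lt_succ_self i) hmem
    rcases this with ⟨_, h2⟩ | ⟨_, h2⟩
    · exact h2 hr1
    · exact h2 hrj

theorem statement0 {P : Type} [Fintype P] [Nonempty P] {n : ℕ} (hn : 2 ≤ n)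
    (W : Fin n → Set (World P)) (hne : ∀ i, (W i).Nonempty) (hSD : SD W) :
    ∃ le : Fin n → (World P → World P → Prop),
      le ⟨0, by omega⟩ = fullMeet (W ⟨0, by omega⟩) ∧
      (∀ i, TotalPreorder (le i) ∧ Faithful (le i) (W i)) ∧
      (∀ (i : ℕ) (hi : i + 1 < n),
        ∃ A B : Set (World P), A.Nonempty ∧
          W ⟨i + 1, hi⟩ =
            minSet A (le ⟨i, by omega⟩) ∪
              minSet Bᶜ (lexRev (le ⟨i, by omega⟩) A) ∧
          IsModCon (lexRev (le ⟨i, by omega⟩) A) (minSet A (le ⟨i, by omega⟩)) B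
            (le ⟨i + 1, hi⟩)) := by
  classical
  refine ⟨fun k => fun r r' => gAux W k.1 r' ≤ gAux W k.1 r, ?_, ?_, ?_⟩
  · -- base case: full meet
    funext r r'
    apply propext
    have h0 : (0 : ℕ) < n := by omega
    have hval : ∀ x : World P, x ∉ W ⟨0, h0⟩ → gAux W 0 x = 0 := by
      intro x hx
      apply gAux_zero
      intro j hj hxj
      have : j = ⟨0, h0⟩ := Fin.ext (show j.1 = 0 by omega)
      exact hx (this ▸ hxj)
    show (gAux W 0 r' ≤ gAux W 0 r) ↔ fullMeet (W ⟨0, h0⟩) r r'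
    unfold fullMeet
    by_cases ha : r ∈ W ⟨0, h0⟩ <;> by_cases hb : r' ∈ W ⟨0, h0⟩
    · rw [gAux_of_mem W h0 ha, gAux_of_mem W h0 hb]; simp [ha]
    · rw [gAux_of_mem W h0 ha, hval r' hb]; simp [ha]
    · rw [hval r ha, gAux_of_mem W h0 hb]; simp [ha, hb]
    · rw [hval r ha, hval r' hb]; simp [ha, hb]
  · -- total preorder and faithful
    intro k
    constructor
    · exact ⟨fun r => le_refl _, fun a b c h1 h2 => le_trans h2 h1, fun r r' => le_total _ _⟩
    · unfold Faithful minSet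
      ext r
      simp only [Set.mem_setOf_eq, Set.mem_univ, true_and, forall_const]
      constructor
      · intro hmin
        obtain ⟨w, hw⟩ := hne k
        have hwk : w ∈ W ⟨k.1, k.isLt⟩ := by
          have : (⟨k.1, k.isLt⟩ : Fin n) = k := Fin.ext rfl
          exact this ▸ hw
        have h1 : gAux W k.1 w = k.1 + 1 := gAux_of_mem W k.isLt hwk
        have h2 : gAux W k.1 r = k.1 + 1 :=
          le_antisymm (gAux_le W k.1 r) (h1 ▸ hmin w)
        obtain ⟨hn', hr⟩ := gAux_mem_of_eq W h2
        have : (⟨k.1, hn'⟩ : Fin n) = k := Fin.ext rfl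
        exact this ▸ hr
      · intro hr r'
        have hrk : r ∈ W ⟨k.1, k.isLt⟩ := by
          have : (⟨k.1, k.isLt⟩ : Fin n) = k := Fin.ext rfl
          exact this ▸ hr
        rw [gAux_of_mem W k.isLt hrk]
        exact gAux_le W k.1 r'
  · -- the step
    intro i hi
    have hin : i < n := by omega
    refine ⟨W ⟨i + 1, hi⟩, (W ⟨i + 1, hi⟩ \ W ⟨i, hin⟩)ᶜ, hne _, ?_⟩
    have hBc : ∀ x : World P, x ∈ ((W ⟨i + 1, hi⟩ \ W ⟨i, hin⟩)ᶜ)ᶜ ↔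
        (x ∈ W ⟨i + 1, hi⟩ ∧ x ∉ W ⟨i, hin⟩) := by
      intro x; simp
    have hBm : ∀ x : World P, x ∈ (W ⟨i + 1, hi⟩ \ W ⟨i, hin⟩)ᶜ ↔
        ¬ (x ∈ W ⟨i + 1, hi⟩ ∧ x ∉ W ⟨i, hin⟩) := by
      intro x; simp [Set.mem_compl_iff, Set.mem_diff]
    have key2 : ∀ r : World P, r ∈ W ⟨i + 1, hi⟩ → r ∉ W ⟨i, hin⟩ → gAux W i r = 0 := by
      intro r hr hni
      apply gAux_zero
      intro j hj hrj
      exact hni (sd_key hSD hi hr j hj hrj)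
    have hgsucc : ∀ r : World P, r ∈ W ⟨i + 1, hi⟩ → gAux W (i + 1) r = i + 2 :=
      fun r hr => gAux_of_mem W hi hr
    have hgnot : ∀ r : World P, r ∉ W ⟨i + 1, hi⟩ → gAux W (i + 1) r = gAux W i r :=
      fun r hr => gAux_succ_not_mem W hi hr
    -- the decomposition equality
    have hWeq : W ⟨i + 1, hi⟩ =
        minSet (W ⟨i + 1, hi⟩) (fun r r' => gAux W i r' ≤ gAux W i r) ∪
          minSet ((W ⟨i + 1, hi⟩ \ W ⟨i, hin⟩)ᶜ)ᶜ
            (lexRev (fun r r' => gAux W i r' ≤ gAux W i r) (W ⟨i + 1, hi⟩)) := by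
      ext r
      constructor
      · intro hr
        by_cases hwi : r ∈ W ⟨i, hin⟩
        · left
          refine ⟨hr, fun r' hr' => ?_⟩
          show gAux W i r' ≤ gAux W i r
          rw [gAux_of_mem W hin hwi]
          exact gAux_le W i r'
        · right
          refine ⟨(hBc r).mpr ⟨hr, hwi⟩, fun r' hr' => ?_⟩
          have hr'' := (hBc r').mp hr'
          exact Or.inr ⟨iff_of_true hr hr''.1,
            show gAux W i r' ≤ gAux W i r by rw [key2 r' hr''.1 hr''.2]; omega⟩
      · rintro (⟨hr, _⟩ | ⟨hr, _⟩)
        · exact hr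
        · exact ((hBc r).mp hr).1
    -- total preorder at i+1
    have hTP : TotalPreorder (fun r r' => gAux W (i + 1) r' ≤ gAux W (i + 1) r) :=
      ⟨fun r => le_refl _, fun a b c h1 h2 => le_trans h2 h1, fun r r' => le_total _ _⟩
    -- C1
    have hC1 : ∀ r r' : World P,
        r ∈ (W ⟨i + 1, hi⟩ \ W ⟨i, hin⟩)ᶜ → r' ∈ (W ⟨i + 1, hi⟩ \ W ⟨i, hin⟩)ᶜ →
        ((gAux W (i + 1) r' ≤ gAux W (i + 1) r) ↔
          lexRev (fun r r' => gAux W i r' ≤ gAux W i r) (W ⟨i + 1, hi⟩) r r') := by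
      intro r r' hrB hr'B
      have hrB' : r ∈ W ⟨i + 1, hi⟩ → r ∈ W ⟨i, hin⟩ := by
        intro h; by_contra h'; exact (hBm r).mp hrB ⟨h, h'⟩
      by_cases hr : r ∈ W ⟨i + 1, hi⟩ <;> by_cases hr' : r' ∈ W ⟨i + 1, hi⟩
      · apply iff_of_true
        · rw [hgsucc r hr]; exact le_trans (gAux_le W (i + 1) r') (by omega)
        · refine Or.inr ⟨iff_of_true hr hr', ?_⟩
          show gAux W i r' ≤ gAux W i r
          rw [gAux_of_mem W hin (hrB' hr)]; exact gAux_le W i r'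
      · apply iff_of_true
        · rw [hgsucc r hr]; exact le_trans (gAux_le W (i + 1) r') (by omega)
        · exact Or.inl ⟨hr, hr'⟩
      · apply iff_of_false
        · rw [hgsucc r' hr', hgnot r hr]
          have := gAux_le W i r
          omega
        · rintro (⟨h1, _⟩ | ⟨h1, _⟩)
          · exact hr h1
          · exact hr (h1.mpr hr')
      · rw [hgnot r hr, hgnot r' hr']
        constructor
        · intro h; exact Or.inr ⟨iff_of_false hr hr', h⟩
        · rintro (⟨h1, _⟩ | ⟨_, h2⟩)
          · exact absurd h1 hr
          · exact h2
    -- C2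
    have hC2 : ∀ r r' : World P,
        r ∉ (W ⟨i + 1, hi⟩ \ W ⟨i, hin⟩)ᶜ → r' ∉ (W ⟨i + 1, hi⟩ \ W ⟨i, hin⟩)ᶜ →
        ((gAux W (i + 1) r' ≤ gAux W (i + 1) r) ↔
          lexRev (fun r r' => gAux W i r' ≤ gAux W i r) (W ⟨i + 1, hi⟩) r r') := by
      intro r r' hrB hr'B
      have hr2 : r ∈ W ⟨i + 1, hi⟩ ∧ r ∉ W ⟨i, hin⟩ := by
        by_contra h; exact hrB ((hBm r).mpr h)
      have hr'2 : r' ∈ W ⟨i + 1, hi⟩ ∧ r' ∉ W ⟨i, hin⟩ := by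
        by_contra h; exact hr'B ((hBm r').mpr h)
      apply iff_of_true
      · rw [hgsucc r hr2.1]
        exact le_trans (gAux_le W (i + 1) r') (by omega)
      · exact Or.inr ⟨iff_of_true hr2.1 hr'2.1,
          show gAux W i r' ≤ gAux W i r by rw [key2 r' hr'2.1 hr'2.2]; omega⟩
    -- faithfulness at i+1
    have hF : minSet Set.univ (fun r r' => gAux W (i + 1) r' ≤ gAux W (i + 1) r) =
        W ⟨i + 1, hi⟩ := by
      ext r
      simp only [minSet, Set.mem_setOf_eq, Set.mem_univ, true_and, forall_const]
      constructor
      · intro hmin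
        obtain ⟨w, hw⟩ := hne ⟨i + 1, hi⟩
        have h1 : gAux W (i + 1) w = i + 2 := hgsucc w hw
        have h2 : gAux W (i + 1) r = i + 2 :=
          le_antisymm (gAux_le W (i + 1) r) (h1 ▸ hmin w)
        obtain ⟨hn', hr⟩ := gAux_mem_of_eq W h2
        exact hr
      · intro hr r'
        rw [hgsucc r hr]
        exact gAux_le W (i + 1) r'
    refine ⟨hWeq, hTP, hC1, hC2, ?_, hF.trans hWeq⟩
    -- MC
    intro r r' hrB hr'B hr'n
    have hr2 : r ∈ W ⟨i + 1, hi⟩ ∧ r ∉ W ⟨i, hin⟩ := by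
      by_contra h; exact hrB ((hBm r).mpr h)
    have hr'1 : r' ∉ W ⟨i + 1, hi⟩ := fun hmem => hr'n (hWeq ▸ hmem)
    constructor
    · show gAux W (i + 1) r' ≤ gAux W (i + 1) r
      rw [hgsucc r hr2.1]
      exact le_trans (gAux_le W (i + 1) r') (by omega)
    · show ¬ (gAux W (i + 1) r ≤ gAux W (i + 1) r')
      rw [hgsucc r hr2.1, hgnot r' hr'1]
      have := gAux_le W i r'
      omega
end

section
/- Assume P has at least two elements (so M has at least four worlds). The full-meet revision policy, which revises a nonempty belief set W ⊆ M by a nonempty A ⊆ M with result min(A, ≼_W) and assigns to the result its own full-meet preorder, violates the Darwiche–Pearl semantic condition (R2): there exist a nonempty W ⊆ M, a nonempty A ⊆ M, and worlds r, r' ∈ M\A such that r ≺_W r' but not r ≺_{W'} r', where W' = min(A, ≼_W) and ≼_{W'} is the full-meet preorder of W'. Consequently, full-meet AGM revision violates the conjunction of the Darwiche–Pearl postulates (DP1)–(DP4). -/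
theorem statement1 {P : Type} [Fintype P] [Nonempty P]
    (hP : 2 ≤ Fintype.card P) :
    ∃ (W A : Set (World P)) (r r' : World P),
      W.Nonempty ∧ A.Nonempty ∧ r ∉ A ∧ r' ∉ A ∧
      strictPart (fullMeet W) r r' ∧
      ¬ strictPart (fullMeet (minSet A (fullMeet W))) r r' := by

  classical
  obtain ⟨p⟩ := (inferInstance : Nonempty P)
  set r : World P := fun _ => false with hr
  set r' : World P := fun _ => true with hr'
  set w : World P := fun x => if x = p then true else false with hw
  obtain ⟨q, hq⟩ := Fintype.exists_ne_of_one_lt_card hP p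
  have hwr : w ≠ r := by
    intro h; have := congrFun h p; simp [hw, hr] at this
  have hwr' : w ≠ r' := by
    intro h; have := congrFun h q; simp [hw, hr', hq] at this
  have hrr' : r ≠ r' := by
    intro h; have := congrFun h p; simp [hr, hr'] at this
  refine ⟨{r}, {w}, r, r', ⟨r, rfl⟩, ⟨w, rfl⟩, ?_, ?_, ?_, ?_⟩
  · simp [Ne.symm hwr]
  · simp [Ne.symm hwr']
  · exact ⟨Or.inl rfl, by simp [fullMeet, hrr', Ne.symm hrr']⟩
  · intro ⟨_, h2⟩
    exact h2 (Or.inr fun hmem => Ne.symm hwr hmem.1)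
end

section
/- (Katsuno–Mendelzon representation of AGM revision, semantic form) Let ∘ be a function assigning to each nonempty W ⊆ M and each A ⊆ M a subset W∘A ⊆ M. Then ∘ satisfies all of the following for all nonempty W and all A, B ⊆ M: (i) W∘A ⊆ A; (ii) W∩A ⊆ W∘A; (iii) if W∩A ≠ ∅ then W∘A ⊆ W∩A; (iv) if A ≠ ∅ then W∘A ≠ ∅; (v) (W∘A)∩B ⊆ W∘(A∩B); (vi) if (W∘A)∩B ≠ ∅ then W∘(A∩B) ⊆ (W∘A)∩B — if and only if for every nonempty W ⊆ M there exists a total preorder ≼_W on M faithful to W such that W∘A = min(A, ≼_W) for all A ⊆ M. -/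
lemma finset_min {α : Type*} (le : α → α → Prop)
    (hrefl : Reflexive le) (htrans : Transitive le)
    (htot : ∀ a b, le a b ∨ le b a) :
    ∀ s : Finset α, s.Nonempty → ∃ r ∈ s, ∀ r' ∈ s, le r r' := by
  classical
  intro s
  induction s using Finset.induction_on with
  | empty => intro h; exact absurd h (by simp)
  | @insert a s ha ih =>
    intro _
    by_cases hs : s.Nonempty
    · obtain ⟨m, hm, hmin⟩ := ih hs
      rcases htot a m with hab | hba
      · exact ⟨a, Finset.mem_insert_self a s, by
          intro r' hr'
          rcases Finset.mem_insert.mp hr' with h | h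
          · subst h; exact hrefl _
          · exact htrans hab (hmin r' h)⟩
      · exact ⟨m, Finset.mem_insert_of_mem hm, by
          intro r' hr'
          rcases Finset.mem_insert.mp hr' with h | h
          · subst h; exact hba
          · exact hmin r' h⟩
    · refine ⟨a, Finset.mem_insert_self a s, ?_⟩
      intro r' hr'
      rcases Finset.mem_insert.mp hr' with h | h
      · subst h; exact hrefl _
      · exact absurd ⟨r', h⟩ hs

lemma set_min {P : Type} [Fintype P] (le : World P → World P → Prop)
    (hrefl : Reflexive le) (htrans : Transitive le)
    (htot : ∀ a b, le a b ∨ le b a) (A : Set (World P)) (hA : A.Nonempty) :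
    (minSet A le).Nonempty := by
  classical
  have hfin : A.Finite := Set.toFinite A
  obtain ⟨r, hr, hmin⟩ := finset_min le hrefl htrans htot hfin.toFinset
    ((Set.Finite.toFinset_nonempty hfin).mpr hA)
  refine ⟨r, hfin.mem_toFinset.mp hr, fun r' hr' => hmin r' (hfin.mem_toFinset.mpr hr')⟩

theorem statement6 {P : Type} [Fintype P] [Nonempty P]
    (rev : Set (World P) → Set (World P) → Set (World P)) :
    (∀ W A B : Set (World P), W.Nonempty →
      (rev W A ⊆ A) ∧
      (W ∩ A ⊆ rev W A) ∧
      (W ∩ A ≠ ∅ → rev W A ⊆ W ∩ A) ∧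
      (A ≠ ∅ → rev W A ≠ ∅) ∧
      ((rev W A) ∩ B ⊆ rev W (A ∩ B)) ∧
      ((rev W A) ∩ B ≠ ∅ → rev W (A ∩ B) ⊆ (rev W A) ∩ B)) ↔
    (∀ W : Set (World P), W.Nonempty →
      ∃ le : World P → World P → Prop,
        TotalPreorder le ∧ Faithful le W ∧ ∀ A, rev W A = minSet A le) := by
  classical
  constructor
  · -- forward: construct the preorder from rev
    intro h W hW
    have hi : ∀ A : Set (World P), rev W A ⊆ A := fun A => (h W A A hW).1
    have hii : ∀ A : Set (World P), W ∩ A ⊆ rev W A := fun A => (h W A A hW).2.1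
    have hiii : ∀ A : Set (World P), W ∩ A ≠ ∅ → rev W A ⊆ W ∩ A :=
      fun A => (h W A A hW).2.2.1
    have hiv : ∀ A : Set (World P), A.Nonempty → (rev W A).Nonempty := by
      intro A hA
      rw [Set.nonempty_iff_ne_empty]
      exact (h W A A hW).2.2.2.1 (Set.nonempty_iff_ne_empty.mp hA)
    have hv : ∀ A B : Set (World P), rev W A ∩ B ⊆ rev W (A ∩ B) :=
      fun A B => (h W A B hW).2.2.2.2.1
    have hvi : ∀ A B : Set (World P), (rev W A ∩ B).Nonempty →
        rev W (A ∩ B) ⊆ rev W A ∩ B := by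
      intro A B hAB
      exact (h W A B hW).2.2.2.2.2 (Set.nonempty_iff_ne_empty.mp hAB)
    -- key: restriction lemma
    have hkey : ∀ A B : Set (World P), B ⊆ A → (rev W A ∩ B).Nonempty →
        rev W B = rev W A ∩ B := by
      intro A B hBA hne
      have hAB : A ∩ B = B := Set.inter_eq_self_of_subset_right hBA
      have := Set.Subset.antisymm (hvi A B hne) (hv A B)
      rwa [hAB] at this
    set le : World P → World P → Prop := fun r r' => r ∈ rev W {r, r'} with hle
    -- main representation: rev W A = minSet A le
    have hmain : ∀ A : Set (World P), rev W A = minSet A le := by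
      intro A
      ext r
      constructor
      · intro hr
        refine ⟨hi A hr, ?_⟩
        intro r' hr'
        have hsub : ({r, r'} : Set (World P)) ⊆ A := by
          intro x hx
          rcases hx with hx | hx
          · subst hx; exact hi A hr
          · subst hx; exact hr'
        have hne : (rev W A ∩ {r, r'}).Nonempty := ⟨r, hr, Or.inl rfl⟩
        have := hkey A {r, r'} hsub hne
        show r ∈ rev W {r, r'}
        rw [this]
        exact ⟨hr, Or.inl rfl⟩
      · rintro ⟨hrA, hmin⟩
        obtain ⟨s, hs⟩ := hiv A ⟨r, hrA⟩
        have hsA : s ∈ A := hi A hs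
        have hsub : ({r, s} : Set (World P)) ⊆ A := by
          intro x hx
          rcases hx with hx | hx
          · subst hx; exact hrA
          · subst hx; exact hsA
        have hne : (rev W A ∩ {r, s}).Nonempty := ⟨s, hs, Or.inr rfl⟩
        have heq := hkey A {r, s} hsub hne
        have hrs : r ∈ rev W {r, s} := hmin s hsA
        rw [heq] at hrs
        exact hrs.1
    have hrefl : Reflexive le := by
      intro r
      show r ∈ rev W {r, r}
      have : ({r, r} : Set (World P)) = {r} := by simp
      rw [this]
      obtain ⟨x, hx⟩ := hiv {r} ⟨r, rfl⟩
      have := hi {r} hx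
      have h' : x = r := this
      subst h'
      exact hx
    have htot : ∀ r r', le r r' ∨ le r' r := by
      intro r r'
      obtain ⟨x, hx⟩ := hiv {r, r'} ⟨r, Or.inl rfl⟩
      rcases hi {r, r'} hx with h' | h'
      · subst h'; exact Or.inl hx
      · subst h'
        right
        show x ∈ rev W {x, r}
        have : ({x, r} : Set (World P)) = {r, x} := Set.pair_comm x r
        rw [this]
        exact hx
    have htrans : Transitive le := by
      intro r s t hrs hst
      have hA : ({r, s, t} : Set (World P)).Nonempty := ⟨r, Or.inl rfl⟩
      obtain ⟨x, hx⟩ := hiv _ hA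
      -- first show r ∈ rev W {r,s,t}
      have hrrev : r ∈ rev W ({r, s, t} : Set (World P)) := by
        have hsrev : s ∈ rev W ({r, s, t} : Set (World P)) → r ∈ rev W ({r, s, t} : Set (World P)) := by
          intro hsx
          have hsub : ({r, s} : Set (World P)) ⊆ {r, s, t} := by
            intro y hy
            rcases hy with hy | hy
            · exact Or.inl hy
            · exact Or.inr (Or.inl hy)
          have hne : (rev W {r, s, t} ∩ {r, s}).Nonempty := ⟨s, hsx, Or.inr rfl⟩
          have heq := hkey {r, s, t} {r, s} hsub hne
          have : r ∈ rev W ({r, s} : Set (World P)) := hrs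
          rw [heq] at this
          exact this.1
        rcases hi {r, s, t} hx with h' | h' | h'
        · rw [h'] at hx; exact hx
        · rw [h'] at hx; exact hsrev hx
        · rw [h'] at hx
          -- x = t : show s ∈ rev W {r,s,t}
          have hsub : ({s, t} : Set (World P)) ⊆ {r, s, t} := by
            intro y hy
            rcases hy with hy | hy
            · exact Or.inr (Or.inl hy)
            · exact Or.inr (Or.inr hy)
          have hne : (rev W {r, s, t} ∩ {s, t}).Nonempty := ⟨t, hx, Or.inr rfl⟩
          have heq := hkey {r, s, t} {s, t} hsub hne
          have : s ∈ rev W ({s, t} : Set (World P)) := hst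
          rw [heq] at this
          exact hsrev this.1
      -- now extract le r t
      have hsub : ({r, t} : Set (World P)) ⊆ {r, s, t} := by
        intro y hy
        rcases hy with hy | hy
        · exact Or.inl hy
        · exact Or.inr (Or.inr hy)
      have hne : (rev W {r, s, t} ∩ {r, t}).Nonempty := ⟨r, hrrev, Or.inl rfl⟩
      have heq := hkey {r, s, t} {r, t} hsub hne
      show r ∈ rev W {r, t}
      rw [heq]
      exact ⟨hrrev, Or.inl rfl⟩
    refine ⟨le, ⟨hrefl, htrans, htot⟩, ?_, hmain⟩
    -- faithfulness
    unfold Faithful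
    rw [← hmain Set.univ]
    have h1 : W ∩ Set.univ = W := Set.inter_univ W
    have h2 : rev W Set.univ ⊆ W := by
      have := hiii Set.univ (by rw [h1]; exact Set.nonempty_iff_ne_empty.mp hW)
      rw [h1] at this
      exact this
    have h3 : W ⊆ rev W Set.univ := by
      have := hii Set.univ
      rw [h1] at this
      exact this
    exact Set.Subset.antisymm h2 h3
  · -- backward: verify the postulates
    intro h W A B hW
    obtain ⟨le, ⟨hrefl, htrans, htot⟩, hfaith, hrep⟩ := h W hW
    have hWmin : minSet Set.univ le = W := hfaith
    refine ⟨?_, ?_, ?_, ?_, ?_, ?_⟩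
    · rw [hrep]; exact fun r hr => hr.1
    · rw [hrep]
      rintro r ⟨hrW, hrA⟩
      have : r ∈ minSet Set.univ le := by rw [hWmin]; exact hrW
      exact ⟨hrA, fun r' _ => this.2 r' (Set.mem_univ r')⟩
    · intro hne
      rw [hrep]
      obtain ⟨w, hwW, hwA⟩ := Set.nonempty_iff_ne_empty.mpr hne
      rintro r ⟨hrA, hmin⟩
      have hw : w ∈ minSet Set.univ le := by rw [hWmin]; exact hwW
      have hrW : r ∈ W := by
        rw [← hWmin]
        exact ⟨Set.mem_univ r, fun r' _ => htrans (hmin w hwA) (hw.2 r' (Set.mem_univ r'))⟩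
      exact ⟨hrW, hrA⟩
    · intro hne
      rw [hrep, ← Set.nonempty_iff_ne_empty]
      exact set_min le hrefl htrans htot A (Set.nonempty_iff_ne_empty.mpr hne)
    · rw [hrep, hrep]
      rintro r ⟨⟨hrA, hmin⟩, hrB⟩
      exact ⟨⟨hrA, hrB⟩, fun r' hr' => hmin r' hr'.1⟩
    · intro hne
      rw [hrep] at hne ⊢
      rw [hrep]
      obtain ⟨s, ⟨hsA, hsmin⟩, hsB⟩ := Set.nonempty_iff_ne_empty.mpr hne
      rintro r ⟨⟨hrA, hrB⟩, hmin⟩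
      have hrs : le r s := hmin s ⟨hsA, hsB⟩
      exact ⟨⟨hrA, fun r' hr' => htrans hrs (hsmin r' hr')⟩, hrB⟩
end

section
/- (Representation of AGM contraction, semantic form) Let ∘ be a function assigning to each nonempty W ⊆ M and each A ⊆ M a subset W∘A ⊆ M. Then ∘ satisfies all of the following for all nonempty W and all A, B ⊆ M: (i) W ⊆ W∘A; (ii) if ¬(W ⊆ A) then W∘A = W; (iii) if A ≠ M then ¬(W∘A ⊆ A); (iv) if W ⊆ A then (W∘A) ∩ A ⊆ W; (v) W∘(A∩B) ⊆ (W∘A) ∪ (W∘B); (vi) if ¬(W∘(A∩B) ⊆ A) then W∘A ⊆ W∘(A∩B) — if and only if for every nonempty W ⊆ M there exists a total preorder ≼_W on M faithful to W such that W∘A = W ∪ min(M\A, ≼_W) for all A ⊆ M. -/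
private lemma exists_min' {α : Type} (le : α → α → Prop)
    (hrfl : Reflexive le) (htr : Transitive le) (htot : ∀ a b, le a b ∨ le b a)
    (s : Finset α) (hs : s.Nonempty) : ∃ a ∈ s, ∀ b ∈ s, le a b := by
  classical
  induction s using Finset.induction_on with
  | empty => exact absurd hs (by simp)
  | @insert a s ha ih =>
    rcases s.eq_empty_or_nonempty with h | h
    · subst h
      exact ⟨a, by simp, by simp [hrfl a]⟩
    · obtain ⟨m, hm, hmin⟩ := ih h
      rcases htot m a with hma | ham
      · refine ⟨m, Finset.mem_insert_of_mem hm, ?_⟩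
        intro b hb
        rcases Finset.mem_insert.mp hb with rfl | hb
        · exact hma
        · exact hmin b hb
      · refine ⟨a, Finset.mem_insert_self a s, ?_⟩
        intro b hb
        rcases Finset.mem_insert.mp hb with rfl | hb
        · exact hrfl b
        · exact htr ham (hmin b hb)

private lemma minSet_ne {P : Type} [Fintype P] {S : Set (World P)}
    {le : World P → World P → Prop} (h : TotalPreorder le) (hS : S.Nonempty) :
    (minSet S le).Nonempty := by
  classical
  obtain ⟨hrfl, htr, htot⟩ := h
  have hfin : S.Finite := Set.toFinite S
  obtain ⟨a, ha, hmin⟩ := exists_min' le hrfl htr htot hfin.toFinset (hfin.toFinset_nonempty.mpr hS)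
  exact ⟨a, hfin.mem_toFinset.mp ha, fun r' hr' => hmin r' (hfin.mem_toFinset.mpr hr')⟩

theorem statement7 {P : Type} [Fintype P] [Nonempty P]
    (con : Set (World P) → Set (World P) → Set (World P)) :
    (∀ W A B : Set (World P), W.Nonempty →
      (W ⊆ con W A) ∧
      (¬ W ⊆ A → con W A = W) ∧
      (A ≠ Set.univ → ¬ con W A ⊆ A) ∧
      (W ⊆ A → (con W A) ∩ A ⊆ W) ∧
      (con W (A ∩ B) ⊆ con W A ∪ con W B) ∧
      (¬ con W (A ∩ B) ⊆ A → con W A ⊆ con W (A ∩ B))) ↔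
    (∀ W : Set (World P), W.Nonempty →
      ∃ le : World P → World P → Prop,
        TotalPreorder le ∧ Faithful le W ∧
        ∀ A, con W A = W ∪ minSet Aᶜ le) := by
  constructor
  · -- hard direction: postulates ⇒ representation
    intro h W hW
    have h1 : ∀ A, W ⊆ con W A := fun A => (h W A A hW).1
    have h2 : ∀ A, ¬ W ⊆ A → con W A = W := fun A => (h W A A hW).2.1
    have h3 : ∀ A, A ≠ Set.univ → ¬ con W A ⊆ A := fun A => (h W A A hW).2.2.1
    have h4 : ∀ A, W ⊆ A → (con W A) ∩ A ⊆ W := fun A => (h W A A hW).2.2.2.1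
    have h5 : ∀ A B, con W (A ∩ B) ⊆ con W A ∪ con W B :=
      fun A B => (h W A B hW).2.2.2.2.1
    have h6 : ∀ A B, ¬ con W (A ∩ B) ⊆ A → con W A ⊆ con W (A ∩ B) :=
      fun A B => (h W A B hW).2.2.2.2.2
    -- Lemma L: minimality transfers upward
    have hL : ∀ A E : Set (World P), A ⊆ E → ∀ x, x ∈ con W A → x ∉ E → x ∈ con W E := by
      intro A E hAE x hx hxE
      have hEG : E ∩ (A ∪ Eᶜ) = A := by
        rw [Set.inter_union_distrib_left, Set.inter_compl_self, Set.union_empty,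
          Set.inter_eq_self_of_subset_right hAE]
      have h5' := h5 E (A ∪ Eᶜ)
      rw [hEG] at h5'
      rcases h5' hx with h' | h'
      · exact h'
      · by_cases hWG : W ⊆ A ∪ Eᶜ
        · exact h1 E (h4 _ hWG ⟨h', Or.inr hxE⟩)
        · rw [h2 _ hWG] at h'
          exact h1 E h'
    -- Lemma L2: from a witness outside B we get con W B ⊆ con W A
    have hL2 : ∀ A B : Set (World P), A ⊆ B → ∀ x, x ∈ con W A → x ∉ B →
        con W B ⊆ con W A := by
      intro A B hAB x hx hxB
      have hBA : B ∩ A = A := Set.inter_eq_self_of_subset_right hAB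
      have h6' := h6 B A (by rw [hBA]; exact fun hsub => hxB (hsub hx))
      rwa [hBA] at h6'
    have hpair : ∀ r r' : World P, r ∈ con W ({r, r'}ᶜ) ∨ r' ∈ con W ({r, r'}ᶜ) := by
      intro r r'
      have hne : ({r, r'}ᶜ : Set (World P)) ≠ Set.univ := by
        intro he
        have : r ∈ ({r, r'}ᶜ : Set (World P)) := he ▸ Set.mem_univ r
        simp at this
      obtain ⟨x, hx, hx2⟩ := Set.not_subset.mp (h3 _ hne)
      have hx3 : x = r ∨ x = r' := by simp only [Set.mem_compl_iff, not_not] at hx2; simpa using hx2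
      rcases hx3 with rfl | rfl
      · exact Or.inl hx
      · exact Or.inr hx
    refine ⟨fun r r' => r ∈ con W ({r, r'}ᶜ), ⟨?_, ?_, ?_⟩, ?_, ?_⟩
    · -- reflexive
      intro r
      rcases hpair r r with h' | h' <;> exact h'
    · -- transitive
      intro a b c hab hbc
      have hne : ({a, b, c}ᶜ : Set (World P)) ≠ Set.univ := by
        intro he
        have : a ∈ ({a, b, c}ᶜ : Set (World P)) := he ▸ Set.mem_univ a
        simp at this
      have hsubab : ({a, b, c}ᶜ : Set (World P)) ⊆ ({a, b}ᶜ : Set (World P)) :=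
        Set.compl_subset_compl.mpr (by intro y hy; simp at hy ⊢; tauto)
      have hsubbc : ({a, b, c}ᶜ : Set (World P)) ⊆ ({b, c}ᶜ : Set (World P)) :=
        Set.compl_subset_compl.mpr (by intro y hy; simp at hy ⊢; tauto)
      have hsubac : ({a, b, c}ᶜ : Set (World P)) ⊆ ({a, c}ᶜ : Set (World P)) :=
        Set.compl_subset_compl.mpr (by intro y hy; simp at hy ⊢; tauto)
      obtain ⟨x, hx, hx2⟩ := Set.not_subset.mp (h3 _ hne)
      have hx3 : x = a ∨ x = b ∨ x = c := by simp only [Set.mem_compl_iff, not_not] at hx2; simpa using hx2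
      have key : a ∈ con W ({a, b, c}ᶜ) := by
        rcases hx3 with rfl | rfl | rfl
        · exact hx
        · exact hL2 _ _ hsubab x hx (by simp) hab
        · exact hL2 _ _ hsubab b (hL2 _ _ hsubbc x hx (by simp) hbc) (by simp) hab
      exact hL _ _ hsubac a key (by simp)
    · -- total
      intro r r'
      rcases hpair r r' with h' | h'
      · exact Or.inl h'
      · refine Or.inr ?_
        show r' ∈ con W ({r', r}ᶜ)
        rwa [Set.pair_comm]
    · -- faithful
      ext r
      simp only [minSet, Set.mem_setOf_eq, Set.mem_univ, true_and, forall_const]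
      constructor
      · intro hr
        obtain ⟨w, hw⟩ := hW
        have h' : ¬ W ⊆ ({r, w}ᶜ : Set (World P)) := fun hs => by simpa using hs hw
        have hrw : r ∈ con W ({r, w}ᶜ) := hr w
        rwa [h2 _ h'] at hrw
      · intro hr r'
        exact h1 _ hr
    · -- representation identity
      intro A
      have hmin : con W A ∩ Aᶜ = minSet Aᶜ (fun r r' => r ∈ con W ({r, r'}ᶜ)) := by
        ext x
        constructor
        · rintro ⟨hx, hxA⟩
          refine ⟨hxA, fun r' hr' => ?_⟩
          have hsub : A ⊆ ({x, r'}ᶜ : Set (World P)) := by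
            intro z hz
            simp only [Set.mem_compl_iff, Set.mem_insert_iff, Set.mem_singleton_iff]
            rintro (rfl | rfl)
            · exact hxA hz
            · exact hr' hz
          exact hL A _ hsub x hx (by simp)
        · rintro ⟨hxA, hm⟩
          have hne : A ≠ Set.univ := fun he => hxA (by rw [he]; exact Set.mem_univ x)
          obtain ⟨y, hy, hy2⟩ := Set.not_subset.mp (h3 A hne)
          have hle : x ∈ con W ({x, y}ᶜ) := hm y hy2
          have hsub : A ⊆ ({x, y}ᶜ : Set (World P)) := by
            intro z hz
            simp only [Set.mem_compl_iff, Set.mem_insert_iff, Set.mem_singleton_iff]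
            rintro (rfl | rfl)
            · exact hxA hz
            · exact hy2 hz
          exact ⟨hL2 A _ hsub y hy (by simp) hle, hxA⟩
      rw [← hmin]
      by_cases hWA : W ⊆ A
      · ext x
        constructor
        · intro hx
          by_cases hxA : x ∈ A
          · exact Or.inl (h4 A hWA ⟨hx, hxA⟩)
          · exact Or.inr ⟨hx, hxA⟩
        · rintro (hx | ⟨hx, _⟩)
          · exact h1 A hx
          · exact hx
      · rw [h2 A hWA]
        ext x
        simp only [Set.mem_union, Set.mem_inter_iff, Set.mem_compl_iff]
        tauto
  · -- easy direction: representation ⇒ postulates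
    intro h W A B hW
    obtain ⟨le, ⟨hrfl, htr, htot⟩, hF, hcon⟩ := h W hW
    have hWsub : ∀ C : Set (World P), W ⊆ con W C := fun C => by
      rw [hcon]; exact Set.subset_union_left
    have hWmin : ∀ w ∈ W, ∀ r', le w r' := by
      intro w hw r'
      have hm : w ∈ minSet Set.univ le := hF ▸ hw
      exact hm.2 r' (Set.mem_univ r')
    refine ⟨hWsub A, ?_, ?_, ?_, ?_, ?_⟩
    · -- (ii)
      intro hWA
      obtain ⟨w, hw, hwA⟩ := Set.not_subset.mp hWA
      have hsub : minSet Aᶜ le ⊆ W := by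
        intro r hr
        have h1 : le r w := hr.2 w hwA
        have hm : r ∈ minSet Set.univ le :=
          ⟨Set.mem_univ r, fun s _ => htr h1 (hWmin w hw s)⟩
        rwa [hF] at hm
      rw [hcon A, Set.union_eq_left.mpr hsub]
    · -- (iii)
      intro hA
      have hc : (Aᶜ : Set (World P)).Nonempty := Set.nonempty_compl.mpr hA
      obtain ⟨r, hr⟩ := minSet_ne ⟨hrfl, htr, htot⟩ hc
      intro hsub
      exact hr.1 (hsub (by rw [hcon A]; exact Or.inr hr))
    · -- (iv)
      rintro _ x ⟨hx, hxA⟩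
      rw [hcon A] at hx
      rcases hx with hx | hx
      · exact hx
      · exact absurd hxA hx.1
    · -- (v)
      rw [hcon, hcon, hcon]
      rintro x (hx | hx)
      · exact Or.inl (Or.inl hx)
      · have hx1 : x ∈ Aᶜ ∪ Bᶜ := by rw [← Set.compl_inter]; exact hx.1
        rcases hx1 with hxa | hxb
        · exact Or.inl (Or.inr ⟨hxa, fun r' hr' =>
            hx.2 r' (by rw [Set.compl_inter]; exact Or.inl hr')⟩)
        · exact Or.inr (Or.inr ⟨hxb, fun r' hr' =>
            hx.2 r' (by rw [Set.compl_inter]; exact Or.inr hr')⟩)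
    · -- (vi)
      intro hns
      obtain ⟨x, hx, hxA⟩ := Set.not_subset.mp hns
      rw [hcon] at hx
      have hx0 : ∃ x0, x0 ∈ minSet (A ∩ B)ᶜ le ∧ x0 ∉ A := by
        rcases hx with hxW | hxm
        · refine ⟨x, ⟨?_, fun r' _ => hWmin x hxW r'⟩, hxA⟩
          rw [Set.compl_inter]; exact Or.inl hxA
        · exact ⟨x, hxm, hxA⟩
      obtain ⟨x0, hx0m, hx0A⟩ := hx0
      rw [hcon, hcon]
      rintro y (hy | hy)
      · exact Or.inl hy
      · refine Or.inr ⟨?_, fun r' hr' => htr (hy.2 x0 hx0A) (hx0m.2 r' hr')⟩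
        rw [Set.compl_inter]; exact Or.inl hy.1
end

section
/- Let ≼ be a total preorder on M and let A ⊆ M be nonempty. Then the lexicographic revision ≼' of ≼ by A is a total preorder on M satisfying: (R1) for r,r' ∈ A, r ≼' r' iff r ≼ r'; (R2) for r,r' ∈ M\A, r ≼' r' iff r ≼ r'; (LR) for every r ∈ A and r' ∈ M\A, r ≺' r'; moreover min(M, ≼') = min(A, ≼) (so ≼' is faithful to the revision result), and ≼' is the unique total preorder on M satisfying (R1), (R2) and (LR). -/
theorem statement9 {P : Type} [Fintype P] [Nonempty P]
    (le : World P → World P → Prop) (hle : TotalPreorder le)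
    (A : Set (World P)) (hA : A.Nonempty) :
    TotalPreorder (lexRev le A) ∧
    (∀ r r', r ∈ A → r' ∈ A → (lexRev le A r r' ↔ le r r')) ∧
    (∀ r r', r ∉ A → r' ∉ A → (lexRev le A r r' ↔ le r r')) ∧
    (∀ r r', r ∈ A → r' ∉ A → strictPart (lexRev le A) r r') ∧
    minSet Set.univ (lexRev le A) = minSet A le ∧
    (∀ le' : World P → World P → Prop,
      TotalPreorder le' →
      (∀ r r', r ∈ A → r' ∈ A → (le' r r' ↔ le r r')) →
      (∀ r r', r ∉ A → r' ∉ A → (le' r r' ↔ le r r')) →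
      (∀ r r', r ∈ A → r' ∉ A → strictPart le' r r') →
      ∀ r r', le' r r' ↔ lexRev le A r r') := by
  obtain ⟨hrefl, htrans, htot⟩ := hle
  -- total preorder
  have htp : TotalPreorder (lexRev le A) := by
    refine ⟨?_, ?_, ?_⟩
    · intro r; right; exact ⟨Iff.rfl, hrefl r⟩
    · rintro r s t (⟨hr, hs⟩ | ⟨hiff, hrs⟩) (⟨hs', ht⟩ | ⟨hiff', hst⟩)
      · exact absurd hs' hs
      · left; exact ⟨hr, fun ht => hs (hiff'.mpr ht)⟩
      · left; exact ⟨hiff.mpr hs', ht⟩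
      · right; exact ⟨hiff.trans hiff', htrans hrs hst⟩
    · intro r r'
      by_cases hr : r ∈ A <;> by_cases hr' : r' ∈ A
      · rcases htot r r' with h | h
        · left; right; exact ⟨by simp [hr, hr'], h⟩
        · right; right; exact ⟨by simp [hr, hr'], h⟩
      · left; left; exact ⟨hr, hr'⟩
      · right; left; exact ⟨hr', hr⟩
      · rcases htot r r' with h | h
        · left; right; exact ⟨by simp [hr, hr'], h⟩
        · right; right; exact ⟨by simp [hr, hr'], h⟩
  have hR1 : ∀ r r', r ∈ A → r' ∈ A → (lexRev le A r r' ↔ le r r') := by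
    intro r r' hr hr'
    constructor
    · rintro (⟨_, h⟩ | ⟨_, h⟩)
      · exact absurd hr' h
      · exact h
    · intro h; right; exact ⟨by simp [hr, hr'], h⟩
  have hR2 : ∀ r r', r ∉ A → r' ∉ A → (lexRev le A r r' ↔ le r r') := by
    intro r r' hr hr'
    constructor
    · rintro (⟨h, _⟩ | ⟨_, h⟩)
      · exact absurd h hr
      · exact h
    · intro h; right; exact ⟨by simp [hr, hr'], h⟩
  have hLR : ∀ r r', r ∈ A → r' ∉ A → strictPart (lexRev le A) r r' := by
    intro r r' hr hr'
    refine ⟨Or.inl ⟨hr, hr'⟩, ?_⟩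
    rintro (⟨h, _⟩ | ⟨h, _⟩)
    · exact hr' h
    · exact hr' (h.mpr hr)
  refine ⟨htp, hR1, hR2, hLR, ?_, ?_⟩
  · ext r
    constructor
    · rintro ⟨-, hmin⟩
      have hrA : r ∈ A := by
        by_contra hrA
        obtain ⟨a, ha⟩ := hA
        rcases hmin a (Set.mem_univ a) with ⟨h, _⟩ | ⟨h, _⟩
        · exact hrA h
        · exact hrA (h.mpr ha)
      refine ⟨hrA, fun r' hr' => ?_⟩
      exact (hR1 r r' hrA hr').mp (hmin r' (Set.mem_univ r'))
    · rintro ⟨hrA, hmin⟩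
      refine ⟨Set.mem_univ r, fun r' _ => ?_⟩
      by_cases hr' : r' ∈ A
      · exact (hR1 r r' hrA hr').mpr (hmin r' hr')
      · exact Or.inl ⟨hrA, hr'⟩
  · intro le' htp' h1 h2 h3 r r'
    obtain ⟨hrefl', htrans', htot'⟩ := htp'
    by_cases hr : r ∈ A <;> by_cases hr' : r' ∈ A
    · rw [h1 r r' hr hr', hR1 r r' hr hr']
    · constructor
      · intro _; exact Or.inl ⟨hr, hr'⟩
      · intro _; exact (h3 r r' hr hr').1
    · constructor
      · intro h; exact absurd h (h3 r' r hr' hr).2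
      · rintro (⟨h, _⟩ | ⟨h, _⟩)
        · exact absurd h hr
        · exact absurd (h.mpr hr') hr
    · rw [h2 r r' hr hr', hR2 r r' hr hr']
end

section
/- Let ≼ be a total preorder on M faithful to a nonempty R ⊆ M, and let B ⊆ M with M\B ≠ ∅. Then there exists exactly one total preorder ≼'' on M satisfying: (C1) for r,r' ∈ B, r ≼'' r' iff r ≼ r'; (C2) for r,r' ∈ M\B, r ≼'' r' iff r ≼ r'; (MC) for every r ∈ M\B and r' ∈ B with r' ∉ R ∪ min(M\B,≼), r ≺'' r'; and min(M, ≼'') = R ∪ min(M\B,≼) (faithfulness to the contracted belief set). -/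
theorem statement10 {P : Type} [Fintype P] [Nonempty P]
    (le : World P → World P → Prop) (hle : TotalPreorder le)
    (R : Set (World P)) (hR : R.Nonempty) (hfaith : Faithful le R)
    (B : Set (World P)) (hB : Bᶜ ≠ (∅ : Set (World P))) :
    ∃! le'' : World P → World P → Prop,
      TotalPreorder le'' ∧
      (∀ r r', r ∈ B → r' ∈ B → (le'' r r' ↔ le r r')) ∧
      (∀ r r', r ∉ B → r' ∉ B → (le'' r r' ↔ le r r')) ∧
      (∀ r r', r ∉ B → r' ∈ B → r' ∉ R ∪ minSet Bᶜ le → strictPart le'' r r') ∧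
      minSet Set.univ le'' = R ∪ minSet Bᶜ le := by
  classical
  obtain ⟨hrefl, htrans, htot⟩ := hle
  set G := R ∪ minSet Bᶜ le with hG
  -- characterization of R via faithfulness
  have hRm : ∀ r, r ∈ R ↔ ∀ s, le r s := by
    intro r
    constructor
    · intro h s
      rw [← hfaith] at h
      exact h.2 s (Set.mem_univ s)
    · intro h
      rw [← hfaith]
      exact ⟨Set.mem_univ r, fun s _ => h s⟩
  -- a member of B ∩ G is globally minimal
  have hBG : ∀ r, r ∈ B → r ∈ G → ∀ s, le r s := by
    intro r hrB hrG
    rcases hrG with h | h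
    · exact (hRm r).1 h
    · exact absurd h.1 (by simpa using hrB)
  -- a member of G is below every element of Bᶜ
  have hCG : ∀ r, r ∈ G → ∀ s, s ∉ B → le r s := by
    intro r hrG s hs
    rcases hrG with h | h
    · exact (hRm r).1 h s
    · exact h.2 s hs
  -- going down below a globally minimal element lands in R
  have hdown : ∀ r s, le r s → s ∈ R → r ∈ R := by
    intro r s h hs
    exact (hRm r).2 fun x => htrans h ((hRm s).1 hs x)
  obtain ⟨w, hw⟩ := Set.nonempty_iff_ne_empty.mpr hB
  have hwB : w ∉ B := hw
  -- the candidate preorder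
  set le'' : World P → World P → Prop := fun r r' =>
    (r ∈ B ∧ r' ∈ B ∧ le r r') ∨ (r ∉ B ∧ r' ∉ B ∧ le r r') ∨
    (r ∉ B ∧ r' ∈ B ∧ (r' ∈ G → r ∈ G)) ∨ (r ∈ B ∧ r' ∉ B ∧ r ∈ G)
    with hle''def
  have e1 : ∀ r r', r ∈ B → r' ∈ B → (le'' r r' ↔ le r r') := by
    intro r r' h h'; simp only [hle''def]; tauto
  have e2 : ∀ r r', r ∉ B → r' ∉ B → (le'' r r' ↔ le r r') := by
    intro r r' h h'; simp only [hle''def]; tauto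
  have e3 : ∀ r r', r ∉ B → r' ∈ B → (le'' r r' ↔ (r' ∈ G → r ∈ G)) := by
    intro r r' h h'; simp only [hle''def]; tauto
  have e4 : ∀ r r', r ∈ B → r' ∉ B → (le'' r r' ↔ r ∈ G) := by
    intro r r' h h'
    simp only [hle''def]
    constructor
    · rintro (⟨-, hb, -⟩ | ⟨hb, -, -⟩ | ⟨hb, -, -⟩ | ⟨-, -, hg⟩)
      · exact absurd hb h'
      · exact absurd h hb
      · exact absurd h hb
      · exact hg
    · intro hg
      exact Or.inr (Or.inr (Or.inr ⟨h, h', hg⟩))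
  -- G elements are globally le''-minimal
  have hGmin : ∀ r ∈ G, ∀ s, le'' r s := by
    intro r hrG s
    by_cases hrB : r ∈ B <;> by_cases hsB : s ∈ B
    · exact (e1 r s hrB hsB).2 (hBG r hrB hrG s)
    · exact (e4 r s hrB hsB).2 hrG
    · exact (e3 r s hrB hsB).2 fun _ => hrG
    · exact (e2 r s hrB hsB).2 (hCG r hrG s hsB)
  have htp : TotalPreorder le'' := by
    refine ⟨?_, ?_, ?_⟩
    · intro r
      by_cases hrB : r ∈ B
      · exact (e1 r r hrB hrB).2 (hrefl r)
      · exact (e2 r r hrB hrB).2 (hrefl r)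
    · intro r s t hrs hst
      by_cases hrB : r ∈ B <;> by_cases hsB : s ∈ B <;> by_cases htB : t ∈ B
      · exact (e1 r t hrB htB).2 (htrans ((e1 r s hrB hsB).1 hrs) ((e1 s t hsB htB).1 hst))
      · -- r∈B, s∈B, t∉B : need r ∈ G
        refine (e4 r t hrB htB).2 ?_
        have hsG : s ∈ G := (e4 s t hsB htB).1 hst
        have : r ∈ R := hdown r s ((e1 r s hrB hsB).1 hrs) (by
          rcases hsG with h | h
          · exact h
          · exact absurd h.1 (by simpa using hsB))
        exact Or.inl this
      · -- r∈B, s∉B, t∈B : r ∈ G, goal le r t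
        have hrG : r ∈ G := (e4 r s hrB hsB).1 hrs
        exact (e1 r t hrB htB).2 (hBG r hrB hrG t)
      · -- r∈B, s∉B, t∉B : r ∈ G
        exact (e4 r t hrB htB).2 ((e4 r s hrB hsB).1 hrs)
      · -- r∉B, s∈B, t∈B
        refine (e3 r t hrB htB).2 ?_
        intro htG
        have h1 : (s ∈ G → r ∈ G) := (e3 r s hrB hsB).1 hrs
        apply h1
        have hsR : s ∈ R := hdown s t ((e1 s t hsB htB).1 hst) (by
          rcases htG with h | h
          · exact h
          · exact absurd h.1 (by simpa using htB))
        exact Or.inl hsR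
      · -- r∉B, s∈B, t∉B
        have hsG : s ∈ G := (e4 s t hsB htB).1 hst
        have hrG : r ∈ G := ((e3 r s hrB hsB).1 hrs) hsG
        exact (e2 r t hrB htB).2 (hCG r hrG t htB)
      · -- r∉B, s∉B, t∈B
        refine (e3 r t hrB htB).2 ?_
        intro htG
        have hsG : s ∈ G := ((e3 s t hsB htB).1 hst) htG
        have hrs' : le r s := (e2 r s hrB hsB).1 hrs
        rcases hsG with h | h
        · exact Or.inl (hdown r s hrs' h)
        · exact Or.inr ⟨by simpa using hrB, fun x hx => htrans hrs' (h.2 x hx)⟩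
      · exact (e2 r t hrB htB).2 (htrans ((e2 r s hrB hsB).1 hrs) ((e2 s t hsB htB).1 hst))
    · intro r r'
      by_cases hrB : r ∈ B <;> by_cases hr'B : r' ∈ B
      · rcases htot r r' with h | h
        · exact Or.inl ((e1 r r' hrB hr'B).2 h)
        · exact Or.inr ((e1 r' r hr'B hrB).2 h)
      · by_cases hrG : r ∈ G
        · exact Or.inl ((e4 r r' hrB hr'B).2 hrG)
        · exact Or.inr ((e3 r' r hr'B hrB).2 fun h => absurd h hrG)
      · by_cases hr'G : r' ∈ G
        · exact Or.inr ((e4 r' r hr'B hrB).2 hr'G)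
        · exact Or.inl ((e3 r r' hrB hr'B).2 fun h => absurd h hr'G)
      · rcases htot r r' with h | h
        · exact Or.inl ((e2 r r' hrB hr'B).2 h)
        · exact Or.inr ((e2 r' r hr'B hrB).2 h)
  have hMC : ∀ r r', r ∉ B → r' ∈ B → r' ∉ G → strictPart le'' r r' := by
    intro r r' hrB hr'B hr'G
    constructor
    · exact (e3 r r' hrB hr'B).2 fun h => absurd h hr'G
    · intro h
      exact hr'G ((e4 r' r hr'B hrB).1 h)
  have hmin : minSet Set.univ le'' = G := by
    ext r
    constructor
    · rintro ⟨-, h⟩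
      by_cases hrB : r ∈ B
      · exact (e4 r w hrB hwB).1 (h w (Set.mem_univ w))
      · exact Or.inr ⟨by simpa using hrB,
          fun s hs => (e2 r s hrB (by simpa using hs)).1 (h s (Set.mem_univ s))⟩
    · intro h
      exact ⟨Set.mem_univ r, fun s _ => hGmin r h s⟩
  refine ⟨le'', ⟨htp, e1, e2, hMC, hmin⟩, ?_⟩
  -- uniqueness
  rintro le2 ⟨⟨h2refl, h2trans, h2tot⟩, h2c1, h2c2, h2mc, h2min⟩
  have h2Gmin : ∀ r ∈ G, ∀ s, le2 r s := by
    intro r hrG s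
    have : r ∈ minSet Set.univ le2 := by rw [h2min]; exact hrG
    exact this.2 s (Set.mem_univ s)
  funext r r'
  apply propext
  by_cases hrB : r ∈ B <;> by_cases hr'B : r' ∈ B
  · rw [h2c1 r r' hrB hr'B, e1 r r' hrB hr'B]
  · rw [e4 r r' hrB hr'B]
    constructor
    · intro h
      by_contra hrG
      exact (h2mc r' r hr'B hrB hrG).2 h
    · intro h
      exact h2Gmin r h r'
  · rw [e3 r r' hrB hr'B]
    by_cases hr'G : r' ∈ G
    · constructor
      · intro h _
        have : r ∈ minSet Set.univ le2 := by
          refine ⟨Set.mem_univ r, fun s _ => h2trans h (h2Gmin r' hr'G s)⟩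
        rw [h2min] at this
        exact this
      · intro h
        exact h2Gmin r (h hr'G) r'
    · exact iff_of_true (h2mc r r' hrB hr'B hr'G).1 (fun h => absurd h hr'G)
  · rw [h2c2 r r' hrB hr'B, e2 r r' hrB hr'B]
end

section
/- (Dalal layers form a gradual transition) Let N be the cardinality of P, fix a world w0 ∈ M, and for each k with 0 ≤ k ≤ N let L_k = {r ∈ M : |Diff(w0, r)| = k}. Then each L_k is nonempty, and for all indices i, m with 0 ≤ i < m ≤ N, Dist_A(L_i, L_m) = m − i. Consequently, for all i < j < m ≤ N, Dist_A(L_i, L_m) > Dist_A(L_j, L_m), i.e., the sequence of Dalal distance layers around w0 satisfies the strict version of condition (DA). -/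
/-- Hamming distance between two worlds. -/
def hamming {P : Type} [Fintype P] (r r' : World P) : ℕ :=
  (Finset.univ.filter fun p => r p ≠ r' p).card

/-- Dalal's distance from a (nonempty) belief set `W` to a world `r`. -/
noncomputable def dalalD {P : Type} [Fintype P] (W : Set (World P)) (r : World P) : ℕ :=
  sInf {k | ∃ w ∈ W, hamming w r = k}

/-- Dalal's preorder associated with `W`. -/
def dalal {P : Type} [Fintype P] (W : Set (World P)) :
    World P → World P → Prop :=
  fun r r' => dalalD W r ≤ dalalD W r'

/-- Type-A distance between two (nonempty) belief sets. -/
noncomputable def distA {P : Type} [Fintype P] (W1 W2 : Set (World P)) : ℕ :=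
  sInf {d | ∃ w ∈ W1, ∃ w' ∈ W2, hamming w w' = d}

/-- Flip `w0` on the coordinates in `S`. -/
def flipOn {P : Type} [DecidableEq P] (w0 : World P) (S : Finset P) : World P :=
  fun p => if p ∈ S then !w0 p else w0 p

lemma hamming_flipOn {P : Type} [Fintype P] [DecidableEq P] (w0 : World P) (S : Finset P) :
    hamming w0 (flipOn w0 S) = S.card := by
  unfold hamming flipOn
  congr 1
  ext p
  simp only [Finset.mem_filter, Finset.mem_univ, true_and]
  by_cases h : p ∈ S <;> simp [h]

lemma hamming_flipOn_flipOn {P : Type} [Fintype P] [DecidableEq P] (w0 : World P)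
    (S T : Finset P) (hST : S ⊆ T) :
    hamming (flipOn w0 S) (flipOn w0 T) = T.card - S.card := by
  have : (Finset.univ.filter fun p => flipOn w0 S p ≠ flipOn w0 T p) = T \ S := by
    ext p
    rw [Finset.mem_filter]
    simp only [Finset.mem_univ, true_and, Finset.mem_sdiff, flipOn]
    by_cases hS : p ∈ S
    · have hT : p ∈ T := hST hS
      simp [hS, hT]
    · by_cases hT : p ∈ T <;> simp [hS, hT]
  rw [hamming, this, Finset.card_sdiff_of_subset hST]

lemma hamming_triangle {P : Type} [Fintype P] (a b c : World P) :
    hamming a c ≤ hamming a b + hamming b c := by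
  classical
  unfold hamming
  calc (Finset.univ.filter fun p => a p ≠ c p).card
      ≤ ((Finset.univ.filter fun p => a p ≠ b p) ∪
         (Finset.univ.filter fun p => b p ≠ c p)).card := by
        apply Finset.card_le_card
        intro p hp
        simp only [Finset.mem_filter, Finset.mem_univ, true_and, Finset.mem_union] at *
        by_contra h
        push_neg at h
        exact hp (h.1.trans h.2)
    _ ≤ _ := Finset.card_union_le _ _

lemma hamming_comm {P : Type} [Fintype P] (a b : World P) :
    hamming a b = hamming b a := by
  unfold hamming; congr 1; ext p; simp [ne_comm]

theorem statement13 {P : Type} [Fintype P] [Nonempty P] (w0 : World P) :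
    (∀ k ≤ Fintype.card P, {r : World P | hamming w0 r = k}.Nonempty) ∧
    (∀ i m : ℕ, i < m → m ≤ Fintype.card P →
      distA {r : World P | hamming w0 r = i} {r : World P | hamming w0 r = m} =
        m - i) ∧
    (∀ i j m : ℕ, i < j → j < m → m ≤ Fintype.card P →
      distA {r : World P | hamming w0 r = j} {r : World P | hamming w0 r = m} <
        distA {r : World P | hamming w0 r = i} {r : World P | hamming w0 r = m}) := by
  classical
  have hne : ∀ k ≤ Fintype.card P, {r : World P | hamming w0 r = k}.Nonempty := by
    intro k hk
    obtain ⟨S, -, hS⟩ := Finset.exists_subset_card_eq (s := (Finset.univ : Finset P)) (n := k)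
      (by simpa using hk)
    exact ⟨flipOn w0 S, by simp [hamming_flipOn, hS]⟩
  have hdist : ∀ i m : ℕ, i < m → m ≤ Fintype.card P →
      distA {r : World P | hamming w0 r = i} {r : World P | hamming w0 r = m} = m - i := by
    intro i m him hm
    obtain ⟨T, -, hT⟩ := Finset.exists_subset_card_eq (s := (Finset.univ : Finset P)) (n := m)
      (by simpa using hm)
    obtain ⟨S, hSsub, hS⟩ := Finset.exists_subset_card_eq (s := T) (n := i) (by omega)
    have hmem : (m - i) ∈ {d | ∃ w ∈ {r : World P | hamming w0 r = i},
        ∃ w' ∈ {r : World P | hamming w0 r = m}, hamming w w' = d} := by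
      refine ⟨flipOn w0 S, by simp [hamming_flipOn, hS],
        flipOn w0 T, by simp [hamming_flipOn, hT], ?_⟩
      rw [hamming_flipOn_flipOn w0 S T hSsub, hS, hT]
    apply le_antisymm (Nat.sInf_le hmem)
    have hnonempty : {d | ∃ w ∈ {r : World P | hamming w0 r = i},
        ∃ w' ∈ {r : World P | hamming w0 r = m}, hamming w w' = d}.Nonempty := ⟨_, hmem⟩
    obtain ⟨w, hw, w', hw', hww'⟩ := Nat.sInf_mem hnonempty
    simp only [Set.mem_setOf_eq] at hw hw'
    have h1 := hamming_triangle w0 w w'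
    rw [hw, hw', hww'] at h1
    omega
  refine ⟨hne, hdist, ?_⟩
  intro i j m hij hjm hm
  rw [hdist i m (hij.trans hjm) hm, hdist j m hjm hm]
  omega
end
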